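/- Let v > 0 and let T ~ N(0, v). Then for every c > 0, E[p(−c − T)] = ∫_ℝ p(−c − ψ)·φ_v(ψ) dψ > 0, where φ_v is the density of N(0, v); equivalently, for any τ₁ < τ₀, ∫_ℝ p(τ₁ − τ₀ − ψ)·φ_v(ψ) dψ > 0. -/
import Mathlib


open MeasureTheory ProbabilityTheory Set
open scoped NNReal

section Aux

variable {τnz : ℝ} {q p : ℝ → ℝ}

lemma pulse_q_abs_le_one (hq_sup : (⨆ t, |q t|) = 1) : ∀ t, |q t| ≤ 1 := by
  intro t
  have hbdd : BddAbove (Set.range fun t => |q t|) := by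
    by_contra h
    rw [Real.iSup_of_not_bddAbove h] at hq_sup
    exact one_ne_zero hq_sup.symm
  calc |q t| ≤ ⨆ t, |q t| := le_ciSup hbdd t
    _ = 1 := hq_sup

lemma pulse_p_abs_le_one (hτnz : 0 < τnz)
    (hq_sup : (⨆ t, |q t|) = 1)
    (hp_neg : ∀ t ∈ Set.Ioo (-τnz) 0, p t = q t)
    (hp_pos : ∀ t ∈ Set.Ioo 0 τnz, p t = -q (-t))
    (hp_zero : p 0 = 0)
    (hp_out : ∀ t, t ≤ -τnz ∨ τnz ≤ t → p t = 0) : ∀ t, |p t| ≤ 1 := by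
  have hq1 := pulse_q_abs_le_one hq_sup
  intro t
  rcases le_or_gt t (-τnz) with h1 | h1
  · simp [hp_out t (Or.inl h1)]
  rcases le_or_gt τnz t with h2 | h2
  · simp [hp_out t (Or.inr h2)]
  rcases lt_trichotomy t 0 with h3 | h3 | h3
  · rw [hp_neg t ⟨h1, h3⟩]; exact hq1 t
  · simp [h3, hp_zero]
  · rw [hp_pos t ⟨h3, h2⟩, abs_neg]; exact hq1 (-t)

/-- The key positivity lemma. -/
lemma smoothed_pulse_pos_aux (hτnz : 0 < τnz)
    (hq_pos : ∀ t ∈ Set.Ioo (-τnz) 0, 0 < q t)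
    (hq_sup : (⨆ t, |q t|) = 1)
    (hp_neg : ∀ t ∈ Set.Ioo (-τnz) 0, p t = q t)
    (hp_pos : ∀ t ∈ Set.Ioo 0 τnz, p t = -q (-t))
    (hp_zero : p 0 = 0)
    (hp_out : ∀ t, t ≤ -τnz ∨ τnz ≤ t → p t = 0)
    (hp_meas : Measurable p)
    (v : ℝ≥0) (hv : 0 < v) (c : ℝ) (hc : 0 < c) :
    0 < ∫ ψ, p (-c - ψ) * gaussianPDFReal 0 v ψ := by
  have hp1 := pulse_p_abs_le_one hτnz hq_sup hp_neg hp_pos hp_zero hp_out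
  set φ : ℝ → ℝ := gaussianPDFReal 0 v with hφ
  have hφ_meas : Measurable φ := measurable_gaussianPDFReal 0 v
  have hφ_int : Integrable φ := integrable_gaussianPDFReal 0 v
  have hφ_pos : ∀ x, 0 < φ x := fun x => gaussianPDFReal_pos 0 v x hv.ne'
  -- the reflected gaussian factor
  set h : ℝ → ℝ := fun s => p s * φ (-c - s) with hh
  -- substitution: the original integral equals ∫ h
  have subst : (∫ ψ, p (-c - ψ) * φ ψ) = ∫ s, h s := by
    have e0 : (fun ψ => p (-c - ψ) * φ ψ) = fun ψ => h (-c - ψ) := by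
      funext ψ
      simp only [hh]
      congr 1
      ring_nf
    rw [e0]
    have e1 : (∫ ψ, h (-c - ψ)) = ∫ ψ, h (-c + ψ) := by
      rw [← integral_neg_eq_self (fun ψ => h (-c + ψ)) volume]
      simp [sub_eq_add_neg]
    rw [e1, integral_add_left_eq_self h (-c)]
  rw [subst]
  -- integrability of h
  have hg_int : Integrable (fun s => φ (-c - s)) := by
    have := (hφ_int.comp_add_left (-c)).comp_neg
    simpa [sub_eq_add_neg] using this
  have hh_meas : Measurable h :=
    hp_meas.mul (hφ_meas.comp (measurable_const.sub measurable_id))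
  have hh_int : Integrable h := by
    refine hg_int.mono hh_meas.aestronglyMeasurable (ae_of_all _ fun s => ?_)
    rw [Real.norm_eq_abs, Real.norm_eq_abs, abs_mul,
      abs_of_pos (hφ_pos (-c - s))]
    calc |p s| * φ (-c - s) ≤ 1 * φ (-c - s) :=
          mul_le_mul_of_nonneg_right (hp1 s) (hφ_pos _).le
      _ = φ (-c - s) := one_mul _
    -- done
  have hhneg_int : Integrable (fun s => h (-s)) := hh_int.comp_neg
  -- split the integral at 0 and fold the negative part onto the positive part
  have split : (∫ s, h s) = ∫ s in Set.Ioi (0:ℝ), (h (-s) + h s) := by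
    rw [← intervalIntegral.integral_Iic_add_Ioi (b := (0:ℝ)) hh_int.integrableOn hh_int.integrableOn]
    rw [integral_add hhneg_int.integrableOn hh_int.integrableOn]
    congr 1
    have := integral_comp_neg_Ioi (0:ℝ) h
    rw [neg_zero] at this
    exact this.symm
  rw [split]
  -- positivity of the folded integrand
  have hF_nonneg : ∀ s ∈ Set.Ioi (0:ℝ), 0 ≤ h (-s) + h s := by
    intro s hs
    rcases le_or_gt τnz s with hts | hts
    · have h1 : p s = 0 := hp_out s (Or.inr hts)
      have h2 : p (-s) = 0 := hp_out (-s) (Or.inl (by linarith))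
      simp [hh, h1, h2]
    · have hs0 : (0:ℝ) < s := hs
      have hmem : -s ∈ Set.Ioo (-τnz) 0 := ⟨by linarith, by linarith⟩
      have h1 : p (-s) = q (-s) := hp_neg _ hmem
      have h2 : p s = -q (-s) := hp_pos s ⟨hs0, hts⟩
      have hq : 0 < q (-s) := hq_pos _ hmem
      have hlt : φ (-c - s) < φ (-c - -s) := by
        simp only [hφ, gaussianPDFReal]
        have h2v : (0:ℝ) < 2 * (v:ℝ) := by positivity
        have hsq : (-c - -s - 0)^2 < (-c - s - 0)^2 := by nlinarith
        have hexp : Real.exp (-(-c - s - 0)^2 / (2 * v)) <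
            Real.exp (-(-c - -s - 0)^2 / (2 * v)) := by
          apply Real.exp_lt_exp.2
          apply div_lt_div_of_pos_right _ h2v
          linarith
        have hc0 : (0:ℝ) < (Real.sqrt (2 * Real.pi * v))⁻¹ := by positivity
        exact mul_lt_mul_of_pos_left hexp hc0
      have : 0 < h (-s) + h s := by
        simp only [hh, h1, h2, neg_neg]
        have : q (-s) * φ (-c - -s) + -q (-s) * φ (-c - s)
            = q (-s) * (φ (-c - -s) - φ (-c - s)) := by ring
        rw [this]
        exact mul_pos hq (by linarith)
      exact this.le
  have hF_int : IntegrableOn (fun s => h (-s) + h s) (Set.Ioi (0:ℝ)) :=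
    (hhneg_int.add hh_int).integrableOn
  refine (setIntegral_pos_iff_support_of_nonneg_ae ?_ hF_int).2 ?_
  · exact (ae_restrict_iff' measurableSet_Ioi).2 (ae_of_all _ hF_nonneg)
  · have hsub : Set.Ioo (0:ℝ) τnz ⊆
        Function.support (fun s => h (-s) + h s) ∩ Set.Ioi 0 := by
      intro s hs
      refine ⟨?_, hs.1⟩
      have hmem : -s ∈ Set.Ioo (-τnz) 0 := ⟨by linarith [hs.2], by linarith [hs.1]⟩
      have h1 : p (-s) = q (-s) := hp_neg _ hmem
      have h2 : p s = -q (-s) := hp_pos s hs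
      have hq : 0 < q (-s) := hq_pos _ hmem
      have hlt : φ (-c - s) < φ (-c - -s) := by
        simp only [hφ, gaussianPDFReal]
        have h2v : (0:ℝ) < 2 * (v:ℝ) := by positivity
        have hsq : (-c - -s - 0)^2 < (-c - s - 0)^2 := by nlinarith [hs.1]
        have hexp : Real.exp (-(-c - s - 0)^2 / (2 * v)) <
            Real.exp (-(-c - -s - 0)^2 / (2 * v)) := by
          apply Real.exp_lt_exp.2
          apply div_lt_div_of_pos_right _ h2v
          linarith
        have hc0 : (0:ℝ) < (Real.sqrt (2 * Real.pi * v))⁻¹ := by positivity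
        exact mul_lt_mul_of_pos_left hexp hc0
      have hpos : 0 < h (-s) + h s := by
        simp only [hh, h1, h2, neg_neg]
        have : q (-s) * φ (-c - -s) + -q (-s) * φ (-c - s)
            = q (-s) * (φ (-c - -s) - φ (-c - s)) := by ring
        rw [this]
        exact mul_pos hq (by linarith)
      exact Function.mem_support.2 hpos.ne'
    calc (0:ENNReal) < volume (Set.Ioo (0:ℝ) τnz) := by
          rw [Real.volume_Ioo]; simp [hτnz]
      _ ≤ volume (Function.support (fun s => h (-s) + h s) ∩ Set.Ioi 0) :=
          measure_mono hsub

end Aux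

/-- For the odd pulse `p` and a centered Gaussian density `φ_v`
(`v > 0`), the smoothed pulse evaluated strictly to the left of the crossing is
strictly positive: for every `c > 0`, `∫ p(-c - ψ) φ_v(ψ) dψ > 0`; equivalently,
for any `τ₁ < τ₀`, `∫ p(τ₁ - τ₀ - ψ) φ_v(ψ) dψ > 0`. -/
theorem smoothed_pulse_positive_left_of_crossing
    (τnz : ℝ) (hτnz : 0 < τnz) (q p : ℝ → ℝ)
    (hq_pos : ∀ t ∈ Set.Ioo (-τnz) 0, 0 < q t)
    (hq_zero : ∀ t, t ∉ Set.Ioo (-τnz) 0 → q t = 0)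
    (hq_sup : (⨆ t, |q t|) = 1)
    (hq_uc : UniformContinuousOn q (Set.Ioo (-τnz) 0))
    (hp_neg : ∀ t ∈ Set.Ioo (-τnz) 0, p t = q t)
    (hp_pos : ∀ t ∈ Set.Ioo 0 τnz, p t = -q (-t))
    (hp_zero : p 0 = 0)
    (hp_out : ∀ t, t ≤ -τnz ∨ τnz ≤ t → p t = 0)
    (hp_meas : Measurable p)
    (v : ℝ≥0) (hv : 0 < v) :
    (∀ c : ℝ, 0 < c → 0 < ∫ ψ, p (-c - ψ) * gaussianPDFReal 0 v ψ) ∧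
    (∀ τ₀ τ₁ : ℝ, τ₁ < τ₀ → 0 < ∫ ψ, p (τ₁ - τ₀ - ψ) * gaussianPDFReal 0 v ψ) := by
  constructor
  · intro c hc
    exact smoothed_pulse_pos_aux hτnz hq_pos hq_sup hp_neg hp_pos hp_zero hp_out
      hp_meas v hv c hc
  · intro τ₀ τ₁ hlt
    have := smoothed_pulse_pos_aux hτnz hq_pos hq_sup hp_neg hp_pos hp_zero hp_out
      hp_meas v hv (τ₀ - τ₁) (by linarith)
    have e : (fun ψ => p (τ₁ - τ₀ - ψ) * gaussianPDFReal 0 v ψ)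
        = fun ψ => p (-(τ₀ - τ₁) - ψ) * gaussianPDFReal 0 v ψ := by
      funext ψ; congr 2; ring
    rw [e]
    exact this
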